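/- arXiv:2111.01279 — 2 statements merged into one kernel-verified Lean document; each statement's English description precedes it below -/
import Mathlib

section
/- For every k ≥ 1, the number of 120-avoiding weak ascent sequences of length k equals the number of 201-avoiding weak ascent sequences of length k. Concretely, the map sending n₁…n_k to m₁…m_k with m_j = max{n₁,…,n_k} + min{n₁,…,n_k} − n_{k+1−j} is a bijection between 120-avoiding weak ascent sequences and 201-avoiding weak ascent sequences of length k. -/
open Filter Topology

/-- Number of ascents in a sequence (list) of naturals. -/
def asc (s : List ℕ) : ℕ :=
  ((s.zip s.tail).filter (fun p => p.1 < p.2)).length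

/-- `s` is an ascent sequence: first entry `0`, and each later entry is at most
one more than the number of ascents of the preceding prefix. -/
def IsAscentSeq (s : List ℕ) : Prop :=
  (0 < s.length → s.getD 0 0 = 0) ∧
  ∀ i, 0 < i → i < s.length → s.getD i 0 ≤ asc (s.take i) + 1

/-- `s` is a weak ascent sequence: every entry is at most the number of ascents. -/
def IsWeakAscentSeq (s : List ℕ) : Prop :=
  ∀ x ∈ s, x ≤ asc s

/-- `s` contains the pattern `p`: some subsequence of `s` is order-isomorphic
(including equalities) to `p`. -/
def ContainsPattern (s p : List ℕ) : Prop :=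
  ∃ idx : Fin p.length → ℕ, StrictMono idx ∧ (∀ a, idx a < s.length) ∧
    ∀ a b : Fin p.length, p.get a < p.get b ↔ s.getD (idx a) 0 < s.getD (idx b) 0

def AvoidsPattern (s p : List ℕ) : Prop := ¬ ContainsPattern s p

/-- A pattern of length `j` is a permutation of `0,…,j-1`. -/
def IsPattern (p : List ℕ) : Prop := List.Perm p (List.range p.length)

/-- Sum-indecomposable: no proper prefix whose entries are all smaller than
all entries of the complementary suffix. -/
def SumIndecomposable (p : List ℕ) : Prop :=
  ¬ ∃ i, 0 < i ∧ i < p.length ∧ ∀ x ∈ p.take i, ∀ y ∈ p.drop i, x < y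

/-- Number of `p`-avoiding ascent sequences of length `k`. -/
noncomputable def ascentAvoidCount (p : List ℕ) (k : ℕ) : ℕ :=
  {s : List ℕ | s.length = k ∧ IsAscentSeq s ∧ AvoidsPattern s p}.ncard

/-- Number of `p`-avoiding weak ascent sequences of length `k`. -/
noncomputable def weakAvoidCount (p : List ℕ) (k : ℕ) : ℕ :=
  {s : List ℕ | s.length = k ∧ IsWeakAscentSeq s ∧ AvoidsPattern s p}.ncard

def listMax (s : List ℕ) : ℕ := s.foldr max 0
def listMin (s : List ℕ) : ℕ := s.foldr min (listMax s)

/-- Reverse-complement map: `m j = max + min - n (k+1-j)`. -/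
def revComp (s : List ℕ) : List ℕ :=
  s.reverse.map (fun x => listMax s + listMin s - x)

/-- Occurrence of pattern 000: three equal entries. -/
def Contains000 (s : List ℕ) : Prop :=
  ∃ a b c, a < b ∧ b < c ∧ c < s.length ∧
    s.getD a 0 = s.getD b 0 ∧ s.getD b 0 = s.getD c 0

/-- Occurrence of pattern 100: `n i₁ > n i₂ = n i₃`. -/
def Contains100 (s : List ℕ) : Prop :=
  ∃ a b c, a < b ∧ b < c ∧ c < s.length ∧
    s.getD b 0 < s.getD a 0 ∧ s.getD b 0 = s.getD c 0

/-- Occurrence of pattern 110: `n i₁ = n i₂ > n i₃`. -/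
def Contains110 (s : List ℕ) : Prop :=
  ∃ a b c, a < b ∧ b < c ∧ c < s.length ∧
    s.getD a 0 = s.getD b 0 ∧ s.getD c 0 < s.getD b 0

/-- Occurrence of pattern 120: `n i₂ > n i₁ > n i₃`. -/
def Contains120 (s : List ℕ) : Prop :=
  ∃ a b c, a < b ∧ b < c ∧ c < s.length ∧
    s.getD a 0 < s.getD b 0 ∧ s.getD c 0 < s.getD a 0

/-- Occurrence of pattern 201: `n i₁ > n i₃ > n i₂`. -/
def Contains201 (s : List ℕ) : Prop :=
  ∃ a b c, a < b ∧ b < c ∧ c < s.length ∧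
    s.getD c 0 < s.getD a 0 ∧ s.getD b 0 < s.getD c 0

/-- Occurrence of pattern 012: `n i₁ < n i₂ < n i₃`. -/
def Contains012 (s : List ℕ) : Prop :=
  ∃ a b c, a < b ∧ b < c ∧ c < s.length ∧
    s.getD a 0 < s.getD b 0 ∧ s.getD b 0 < s.getD c 0

/-- Occurrence of pattern 011: `n i₁ < n i₂ = n i₃`. -/
def Contains011 (s : List ℕ) : Prop :=
  ∃ a b c, a < b ∧ b < c ∧ c < s.length ∧
    s.getD a 0 < s.getD b 0 ∧ s.getD b 0 = s.getD c 0

/-- Occurrence of pattern 021: `n i₁ < n i₃ < n i₂`. -/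
def Contains021 (s : List ℕ) : Prop :=
  ∃ a b c, a < b ∧ b < c ∧ c < s.length ∧
    s.getD a 0 < s.getD c 0 ∧ s.getD c 0 < s.getD b 0

/-- Occurrence of pattern 102: `n i₂ < n i₁ < n i₃`. -/
def Contains102 (s : List ℕ) : Prop :=
  ∃ a b c, a < b ∧ b < c ∧ c < s.length ∧
    s.getD b 0 < s.getD a 0 ∧ s.getD a 0 < s.getD c 0

/-- The construction `C = 0101⋯01 W̃₁⋯W̃ₖ` from weak ascent sequences. -/
def buildC (k : ℕ) (W : Fin k → List ℕ) : List ℕ :=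
  (List.replicate k ([0,1] : List ℕ)).flatten ++
    (List.ofFn (fun h : Fin k =>
      (W h).map (fun x =>
        x + 1 + ∑ j ∈ Finset.univ.filter (fun j => j < h), listMax (W j)))).flatten

section RCaux

lemma asc_cons2 (a b : ℕ) (t : List ℕ) :
    asc (a :: b :: t) = (if a < b then 1 else 0) + asc (b :: t) := by
  simp only [asc, List.zip_cons_cons, List.tail_cons, List.filter]
  by_cases h : a < b <;> simp [h, List.zip, Nat.add_comm]

lemma headD_append_cons (L : List ℕ) (y : ℕ) (m : List ℕ) (d : ℕ) :
    (L ++ y :: m).headD d = L.headD y := by cases L <;> simp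

lemma asc_append2 (L : List ℕ) (y x : ℕ) :
    asc (L ++ [y, x]) = asc (L ++ [y]) + (if y < x then 1 else 0) := by
  induction L with
  | nil =>
    have h1 : asc [x] = 0 := rfl
    have h2 : asc [y] = 0 := rfl
    rw [List.nil_append, List.nil_append, asc_cons2, h1, h2]
    omega
  | cons a L ih =>
    cases L with
    | nil =>
      have h1 : asc [x] = 0 := rfl
      have h2 : asc [y] = 0 := rfl
      simp only [List.cons_append, List.nil_append, asc_cons2, h1, h2]
      omega
    | cons b L' =>
      simp only [List.cons_append, asc_cons2] at *
      omega

lemma asc_map_rev (g : ℕ → ℕ) : ∀ (l : List ℕ),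
    (∀ x ∈ l, ∀ y ∈ l, (x < y ↔ g y < g x)) →
    asc ((l.reverse).map g) = asc l
  | [], _ => rfl
  | [a], _ => rfl
  | a :: b :: t, h => by
    have ih := asc_map_rev g (b :: t)
      (fun x hx y hy => h x (List.mem_cons_of_mem _ hx) y (List.mem_cons_of_mem _ hy))
    have h2 : ((b :: t).reverse).map g = (t.reverse).map g ++ [g b] := by simp
    have h1 : ((a :: b :: t).reverse).map g = (t.reverse).map g ++ [g b, g a] := by simp
    rw [h1, asc_append2, ← h2, ih, asc_cons2]
    have hab : a < b ↔ g b < g a := h a (by simp) b (by simp)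
    by_cases hc : a < b
    · simp [hc, hab.mp hc]; omega
    · have : ¬ g b < g a := fun hh => hc (hab.mpr hh)
      simp [hc, this]

lemma le_foldr_max {l : List ℕ} {x : ℕ} (hx : x ∈ l) (init : ℕ) : x ≤ l.foldr max init := by
  induction l with
  | nil => simp at hx
  | cons a t ih =>
    rcases List.mem_cons.mp hx with rfl | h
    · exact le_max_left _ _
    · exact le_trans (ih h) (le_max_right _ _)

lemma foldr_max_le {l : List ℕ} {B init : ℕ} (hinit : init ≤ B) (h : ∀ x ∈ l, x ≤ B) :
    l.foldr max init ≤ B := by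
  induction l with
  | nil => exact hinit
  | cons a t ih => exact max_le (h a (by simp)) (ih (fun x hx => h x (by simp [hx])))

lemma foldr_min_le_init (l : List ℕ) (init : ℕ) : l.foldr min init ≤ init := by
  induction l with
  | nil => exact le_refl _
  | cons a t ih => exact le_trans (min_le_right _ _) ih

lemma foldr_min_le {l : List ℕ} {x : ℕ} (hx : x ∈ l) (init : ℕ) : l.foldr min init ≤ x := by
  induction l with
  | nil => simp at hx
  | cons a t ih =>
    rcases List.mem_cons.mp hx with rfl | h
    · exact min_le_left _ _
    · exact le_trans (min_le_right _ _) (ih h)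

lemma le_foldr_min {l : List ℕ} {B init : ℕ} (hinit : B ≤ init) (h : ∀ x ∈ l, B ≤ x) :
    B ≤ l.foldr min init := by
  induction l with
  | nil => exact hinit
  | cons a t ih => exact le_min (h a (by simp)) (ih (fun x hx => h x (by simp [hx])))

lemma foldr_max_mem (l : List ℕ) (init : ℕ) : l.foldr max init = init ∨ l.foldr max init ∈ l := by
  induction l with
  | nil => exact Or.inl rfl
  | cons a t ih =>
    by_cases h : a ≤ t.foldr max init
    · have : (a :: t).foldr max init = t.foldr max init := by
        simp [List.foldr, max_eq_right h]
      rw [this]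
      rcases ih with h' | h'
      · exact Or.inl h'
      · exact Or.inr (List.mem_cons_of_mem _ h')
    · have : (a :: t).foldr max init = a := by
        simp [List.foldr, max_eq_left (le_of_not_ge h)]
      rw [this]; exact Or.inr List.mem_cons_self

lemma foldr_min_mem (l : List ℕ) (init : ℕ) : l.foldr min init = init ∨ l.foldr min init ∈ l := by
  induction l with
  | nil => exact Or.inl rfl
  | cons a t ih =>
    by_cases h : t.foldr min init ≤ a
    · have : (a :: t).foldr min init = t.foldr min init := by
        simp [List.foldr, min_eq_right h]
      rw [this]
      rcases ih with h' | h'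
      · exact Or.inl h'
      · exact Or.inr (List.mem_cons_of_mem _ h')
    · have : (a :: t).foldr min init = a := by
        simp [List.foldr, min_eq_left (le_of_not_ge h)]
      rw [this]; exact Or.inr List.mem_cons_self

lemma mem_le_listMax {s : List ℕ} {x : ℕ} (hx : x ∈ s) : x ≤ listMax s := le_foldr_max hx 0
lemma listMin_le_mem {s : List ℕ} {x : ℕ} (hx : x ∈ s) : listMin s ≤ x := foldr_min_le hx _
lemma listMin_le_listMax (s : List ℕ) : listMin s ≤ listMax s := foldr_min_le_init _ _
lemma listMax_le {s : List ℕ} {B : ℕ} (h : ∀ x ∈ s, x ≤ B) : listMax s ≤ B :=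
  foldr_max_le (Nat.zero_le B) h

lemma listMax_mem {s : List ℕ} (h : s ≠ []) : listMax s ∈ s := by
  rcases foldr_max_mem s 0 with h0 | hm
  · obtain ⟨a, t, rfl⟩ := List.exists_cons_of_ne_nil h
    have := le_foldr_max (List.mem_cons_self (a := a) (l := t)) 0
    have : a = 0 := by omega
    subst this
    rw [listMax, h0]; exact List.mem_cons_self
  · exact hm

lemma listMin_mem {s : List ℕ} (h : s ≠ []) : listMin s ∈ s := by
  rcases foldr_min_mem s (listMax s) with h0 | hm
  · rw [listMin, h0]; exact listMax_mem h
  · exact hm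

lemma length_revComp (s : List ℕ) : (revComp s).length = s.length := by simp [revComp]

lemma listMax_revComp {s : List ℕ} (h : s ≠ []) : listMax (revComp s) = listMax s := by
  apply le_antisymm
  · apply listMax_le
    intro y hy
    simp only [revComp, List.mem_map, List.mem_reverse] at hy
    obtain ⟨x, hx, rfl⟩ := hy
    have := listMin_le_mem hx
    omega
  · have hmem : listMax s ∈ revComp s := by
      simp only [revComp, List.mem_map, List.mem_reverse]
      refine ⟨listMin s, listMin_mem h, by omega⟩
    exact mem_le_listMax hmem

lemma listMin_revComp {s : List ℕ} (h : s ≠ []) : listMin (revComp s) = listMin s := by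
  apply le_antisymm
  · have hmem : listMin s ∈ revComp s := by
      simp only [revComp, List.mem_map, List.mem_reverse]
      refine ⟨listMax s, listMax_mem h, by have := listMin_le_listMax s; omega⟩
    exact listMin_le_mem hmem
  · show listMin s ≤ (revComp s).foldr min (listMax (revComp s))
    apply le_foldr_min
    · rw [listMax_revComp h]; exact listMin_le_listMax s
    · intro y hy
      simp only [revComp, List.mem_map, List.mem_reverse] at hy
      obtain ⟨x, hx, rfl⟩ := hy
      have := mem_le_listMax hx
      omega

lemma revComp_revComp (s : List ℕ) : revComp (revComp s) = s := by
  rcases eq_or_ne s [] with rfl | h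
  · rfl
  · have hC : listMax (revComp s) + listMin (revComp s) = listMax s + listMin s := by
      rw [listMax_revComp h, listMin_revComp h]
    show (revComp s).reverse.map
        (fun x => listMax (revComp s) + listMin (revComp s) - x) = s
    rw [hC]
    simp only [revComp, List.map_reverse, List.reverse_reverse, List.map_map]
    conv_rhs => rw [← List.map_id s]
    apply List.map_congr_left
    intro x hx
    have h1 := mem_le_listMax hx
    simp only [Function.comp_apply, id]
    omega

lemma asc_revComp (s : List ℕ) : asc (revComp s) = asc s := by
  apply asc_map_rev
  intro x hx y hy
  have h1 := mem_le_listMax hx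
  have h2 := mem_le_listMax hy
  have h3 := listMin_le_mem hx
  have h4 := listMin_le_mem hy
  omega

lemma weak_revComp {s : List ℕ} (h : IsWeakAscentSeq s) : IsWeakAscentSeq (revComp s) := by
  rcases eq_or_ne s [] with rfl | hne
  · intro x hx; simp [revComp] at hx
  · intro y hy
    simp only [revComp, List.mem_map, List.mem_reverse] at hy
    obtain ⟨x, hx, rfl⟩ := hy
    rw [asc_revComp]
    have h1 := listMin_le_mem hx
    have h2 := h _ (listMax_mem hne)
    omega

lemma getD_revComp {s : List ℕ} {i : ℕ} (hi : i < s.length) :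
    (revComp s).getD i 0 = listMax s + listMin s - s.getD (s.length - 1 - i) 0 := by
  have hi' : i < (revComp s).length := by rw [length_revComp]; exact hi
  have hj : s.length - 1 - i < s.length := by omega
  rw [List.getD_eq_getElem _ _ hi', List.getD_eq_getElem _ _ hj]
  simp only [revComp, List.getElem_map, List.getElem_reverse]

lemma getD_le_listMax {s : List ℕ} {i : ℕ} (hi : i < s.length) : s.getD i 0 ≤ listMax s := by
  rw [List.getD_eq_getElem _ _ hi]
  exact mem_le_listMax (List.getElem_mem _)

lemma listMin_le_getD {s : List ℕ} {i : ℕ} (hi : i < s.length) : listMin s ≤ s.getD i 0 := by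
  rw [List.getD_eq_getElem _ _ hi]
  exact listMin_le_mem (List.getElem_mem _)

lemma c120_to_c201 {s : List ℕ} (h : Contains120 s) : Contains201 (revComp s) := by
  obtain ⟨a, b, c, hab, hbc, hc, h1, h2⟩ := h
  have ea : s.length - 1 - (s.length - 1 - a) = a := by omega
  have eb : s.length - 1 - (s.length - 1 - b) = b := by omega
  have ec : s.length - 1 - (s.length - 1 - c) = c := by omega
  have ba := getD_le_listMax (show a < s.length by omega)
  have bb := getD_le_listMax (show b < s.length by omega)
  have bc := getD_le_listMax hc
  have hmm := listMin_le_listMax s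
  refine ⟨s.length - 1 - c, s.length - 1 - b, s.length - 1 - a, by omega, by omega,
    by rw [length_revComp]; omega, ?_, ?_⟩
  · rw [getD_revComp (by omega), getD_revComp (by omega)]
    simp only [ea, eb, ec]
    omega
  · rw [getD_revComp (by omega), getD_revComp (by omega)]
    simp only [ea, eb, ec]
    omega

lemma c201_to_c120 {s : List ℕ} (h : Contains201 s) : Contains120 (revComp s) := by
  obtain ⟨a, b, c, hab, hbc, hc, h1, h2⟩ := h
  have ea : s.length - 1 - (s.length - 1 - a) = a := by omega
  have eb : s.length - 1 - (s.length - 1 - b) = b := by omega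
  have ec : s.length - 1 - (s.length - 1 - c) = c := by omega
  have ba := getD_le_listMax (show a < s.length by omega)
  have bb := getD_le_listMax (show b < s.length by omega)
  have bc := getD_le_listMax hc
  have hmm := listMin_le_listMax s
  refine ⟨s.length - 1 - c, s.length - 1 - b, s.length - 1 - a, by omega, by omega,
    by rw [length_revComp]; omega, ?_, ?_⟩
  · rw [getD_revComp (by omega), getD_revComp (by omega)]
    simp only [ea, eb, ec]
    omega
  · rw [getD_revComp (by omega), getD_revComp (by omega)]
    simp only [ea, eb, ec]
    omega

end RCaux

/-- 120-avoiding and 201-avoiding weak ascent sequences are equinumerous, via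
the reverse-complement bijection. -/
theorem stmt4 (k : ℕ) (hk : 1 ≤ k) :
    {s : List ℕ | s.length = k ∧ IsWeakAscentSeq s ∧ ¬ Contains120 s}.ncard =
      {s : List ℕ | s.length = k ∧ IsWeakAscentSeq s ∧ ¬ Contains201 s}.ncard ∧
    Set.BijOn revComp
      {s : List ℕ | s.length = k ∧ IsWeakAscentSeq s ∧ ¬ Contains120 s}
      {s : List ℕ | s.length = k ∧ IsWeakAscentSeq s ∧ ¬ Contains201 s} := by
  set A := {s : List ℕ | s.length = k ∧ IsWeakAscentSeq s ∧ ¬ Contains120 s} with hA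
  set B := {s : List ℕ | s.length = k ∧ IsWeakAscentSeq s ∧ ¬ Contains201 s} with hB
  have hmapsAB : ∀ s ∈ A, revComp s ∈ B := by
    intro s hs
    obtain ⟨hlen, hweak, havoid⟩ := hs
    refine ⟨by rw [length_revComp]; exact hlen, weak_revComp hweak, ?_⟩
    intro hc
    have := c201_to_c120 hc
    rw [revComp_revComp] at this
    exact havoid this
  have hmapsBA : ∀ s ∈ B, revComp s ∈ A := by
    intro s hs
    obtain ⟨hlen, hweak, havoid⟩ := hs
    refine ⟨by rw [length_revComp]; exact hlen, weak_revComp hweak, ?_⟩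
    intro hc
    have := c120_to_c201 hc
    rw [revComp_revComp] at this
    exact havoid this
  have hinj : Set.InjOn revComp A := by
    intro s hs t ht h
    have := congrArg revComp h
    rwa [revComp_revComp, revComp_revComp] at this
  have hbij : Set.BijOn revComp A B := by
    refine ⟨hmapsAB, hinj, ?_⟩
    intro t ht
    exact ⟨revComp t, hmapsBA t ht, revComp_revComp t⟩
  refine ⟨?_, hbij⟩
  rw [← hbij.image_eq, Set.ncard_image_of_injOn hinj]
end

section
/- For every n ≥ 1, the number of ascent sequences of length 2n that avoid both patterns 000 and 100 is at least n!. Consequently, the number of 000-avoiding ascent sequences of length 2n is at least n!, as is the number of 100-avoiding ascent sequences of length 2n. -/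
open Filter Topology

def Lw (n : ℕ) (σ : Equiv.Perm (Fin n)) : List ℕ :=
  List.range n ++ List.ofFn (fun i => (σ i : ℕ))

lemma Lw_length (n σ) : (Lw n σ).length = 2 * n := by simp [Lw]; ring

lemma Lw_getD_lt (n σ) {i : ℕ} (h : i < n) : (Lw n σ).getD i 0 = i := by
  rw [Lw, List.getD_eq_getElem _ _ (by simp; omega), List.getElem_append_left (by simpa)]
  simp

lemma Lw_getD_ge (n σ) {i : ℕ} (h1 : n ≤ i) (h2 : i < 2 * n) :
    (Lw n σ).getD i 0 = (σ ⟨i - n, by omega⟩ : ℕ) := by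
  rw [Lw, List.getD_eq_getElem _ _ (by simp; omega),
    List.getElem_append_right (by simpa)]
  simp

lemma asc_le_length (l : List ℕ) : asc l ≤ l.length := by
  calc asc l ≤ (l.zip l.tail).length := List.length_filter_le _ _
    _ ≤ l.length := by simp [List.length_zip]

lemma asc_cons_cons (x y : ℕ) (l : List ℕ) :
    asc (x :: y :: l) = (if x < y then 1 else 0) + asc (y :: l) := by
  simp only [asc, List.tail_cons, List.zip_cons_cons, List.filter_cons]
  split <;> simp_all [Nat.add_comm]

lemma asc_le_append : ∀ (a b : List ℕ), asc a ≤ asc (a ++ b)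
  | [], b => by simp [asc]
  | [x], b => by simp [asc]
  | x :: y :: a, b => by
    rw [List.cons_append, List.cons_append, asc_cons_cons, asc_cons_cons]
    have := asc_le_append (y :: a) b
    rw [List.cons_append] at this
    omega

lemma asc_of_chain : ∀ (l : List ℕ), List.Chain' (· < ·) l → asc l = l.length - 1
  | [], _ => by simp [asc]
  | [x], _ => by simp [asc]
  | x :: y :: l, h => by
    unfold List.Chain' at h; rw [List.isChain_cons_cons] at h
    rw [asc_cons_cons, if_pos h.1, asc_of_chain _ h.2]
    simp [Nat.add_comm]

lemma asc_range (n : ℕ) : asc (List.range n) = n - 1 := by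
  simpa using asc_of_chain _ (List.pairwise_lt_range (n := n)).isChain

lemma Lw_isAscentSeq (n : ℕ) (hn : 1 ≤ n) (σ : Equiv.Perm (Fin n)) :
    IsAscentSeq (Lw n σ) := by
  constructor
  · intro _; exact Lw_getD_lt n σ hn
  · intro i hi0 hil
    rw [Lw_length] at hil
    rcases lt_or_ge i n with h | h
    · rw [Lw_getD_lt n σ h]
      have ht : (Lw n σ).take i = List.range i := by
        rw [Lw, List.take_append_of_le_length (by simpa using h.le), List.take_range,
          min_eq_left h.le]
      rw [ht, asc_range]; omega
    · rw [Lw_getD_ge n σ h hil]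
      have ht : (Lw n σ).take i =
          List.range n ++ (List.ofFn (fun i => (σ i : ℕ))).take (i - n) := by
        rw [Lw, List.take_append, List.take_of_length_le (by simpa using h)]
        simp
      have h2 : n - 1 ≤ asc ((Lw n σ).take i) := by
        rw [ht, ← asc_range n]; exact asc_le_append _ _
      have h3 := (σ ⟨i - n, by omega⟩).isLt
      omega

lemma Lw_not000 (n : ℕ) (σ : Equiv.Perm (Fin n)) : ¬ Contains000 (Lw n σ) := by
  rintro ⟨a, b, c, hab, hbc, hc, h1, h2⟩
  rw [Lw_length] at hc
  rcases lt_or_ge b n with h | h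
  · rw [Lw_getD_lt n σ h, Lw_getD_lt n σ (hab.trans h)] at h1; omega
  · rw [Lw_getD_ge n σ h (hbc.trans hc), Lw_getD_ge n σ (h.trans hbc.le) hc] at h2
    have := σ.injective (Fin.val_injective h2)
    simp only [Fin.mk.injEq] at this
    omega

lemma Lw_not100 (n : ℕ) (σ : Equiv.Perm (Fin n)) : ¬ Contains100 (Lw n σ) := by
  rintro ⟨a, b, c, hab, hbc, hc, h1, h2⟩
  rw [Lw_length] at hc
  rcases lt_or_ge b n with h | h
  · rw [Lw_getD_lt n σ h, Lw_getD_lt n σ (hab.trans h)] at h1; omega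
  · rw [Lw_getD_ge n σ h (hbc.trans hc), Lw_getD_ge n σ (h.trans hbc.le) hc] at h2
    have := σ.injective (Fin.val_injective h2)
    simp only [Fin.mk.injEq] at this
    omega

lemma Lw_injective (n : ℕ) : Function.Injective (Lw n) := by
  intro σ τ h
  ext i
  have h1 := Lw_getD_ge n σ (i:=n + i) (by omega) (by omega)
  have h2 := Lw_getD_ge n τ (i:=n + i) (by omega) (by omega)
  rw [h, h2] at h1
  simp only [Nat.add_sub_cancel_left, Fin.eta] at h1
  exact h1.symm

lemma ascseq_finite (n : ℕ) : {l : List ℕ | l.length = 2 * n ∧ IsAscentSeq l}.Finite := by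
  have : {l : List ℕ | l.length = 2 * n ∧ IsAscentSeq l} ⊆
      (fun v : Fin (2 * n) → Fin (2 * n + 2) => List.ofFn (fun i => (v i : ℕ))) '' Set.univ := by
    rintro l ⟨hlen, h0, hrest⟩
    have hbound : ∀ i : Fin (2 * n), l.getD i 0 < 2 * n + 2 := by
      intro i
      rcases Nat.eq_zero_or_pos (i : ℕ) with h | h
      · rw [h, h0 (by omega)]; omega
      · have := hrest i h (by omega)
        have h2 : asc (l.take i) ≤ i := by
          have := asc_le_length (l.take i)
          simp only [List.length_take] at this
          omega
        omega
    refine ⟨fun i => ⟨l.getD i 0, hbound i⟩, trivial, ?_⟩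
    apply List.ext_getElem (by simpa using hlen.symm)
    intro i h1 h2
    simp only [List.getElem_ofFn]
    rw [List.getD_eq_getElem _ _ h2]
  exact Set.Finite.subset (Set.Finite.image _ Set.finite_univ) this

lemma main_bound (n : ℕ) (hn : 1 ≤ n) (S : Set (List ℕ))
    (hS : ∀ σ : Equiv.Perm (Fin n), Lw n σ ∈ S)
    (hfin : S ⊆ {l : List ℕ | l.length = 2 * n ∧ IsAscentSeq l}) :
    Nat.factorial n ≤ S.ncard := by
  have hT : (Lw n '' Set.univ).ncard = Nat.factorial n := by
    rw [Set.ncard_image_of_injective _ (Lw_injective n), Set.ncard_univ,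
      Nat.card_eq_fintype_card, Fintype.card_perm, Fintype.card_fin]
  rw [← hT]
  exact Set.ncard_le_ncard (by rintro _ ⟨σ, -, rfl⟩; exact hS σ)
    ((ascseq_finite n).subset hfin)

/-- At least `n!` ascent sequences of length `2n` avoid both 000 and 100;
hence at least `n!` avoid 000 and at least `n!` avoid 100. -/
theorem stmt7 (n : ℕ) (hn : 1 ≤ n) :
    Nat.factorial n ≤ {s : List ℕ | s.length = 2 * n ∧ IsAscentSeq s ∧
            ¬ Contains000 s ∧ ¬ Contains100 s}.ncard ∧
    Nat.factorial n ≤ {s : List ℕ | s.length = 2 * n ∧ IsAscentSeq s ∧ ¬ Contains000 s}.ncard ∧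
    Nat.factorial n ≤ {s : List ℕ | s.length = 2 * n ∧ IsAscentSeq s ∧ ¬ Contains100 s}.ncard := by
  refine ⟨?_, ?_, ?_⟩
  · exact main_bound n hn _ (fun σ => ⟨Lw_length n σ, Lw_isAscentSeq n hn σ,
      Lw_not000 n σ, Lw_not100 n σ⟩) (fun l hl => ⟨hl.1, hl.2.1⟩)
  · exact main_bound n hn _ (fun σ => ⟨Lw_length n σ, Lw_isAscentSeq n hn σ,
      Lw_not000 n σ⟩) (fun l hl => ⟨hl.1, hl.2.1⟩)
  · exact main_bound n hn _ (fun σ => ⟨Lw_length n σ, Lw_isAscentSeq n hn σ,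
      Lw_not100 n σ⟩) (fun l hl => ⟨hl.1, hl.2.1⟩)
end
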